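/- arXiv:1707.09449 — 6 statements merged into one kernel-verified Lean document; each statement's English description precedes it below -/
import Mathlib

section
/- Let V be a real inner product space, W ⊆ V a subspace, and π a self-adjoint idempotent on V with block components R : W → W and S : W → W⊥. Then ker S = ker R ⊕ ker(id − R) (an orthogonal direct sum inside W), and R(ker S) = ker(id − R). -/
open RealInnerProductSpace

/-- `ker S = ker R ⊕ ker(id − R)` (an orthogonal direct sum inside `W`) and
`R(ker S) = ker(id − R)`. -/
theorem stmt_3 {V : Type*} [NormedAddCommGroup V] [InnerProductSpace ℝ V]
    [FiniteDimensional ℝ V] (W : Submodule ℝ V)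
    (p : V →ₗ[ℝ] V)
    (hsa : ∀ x y : V, ⟪p x, y⟫ = ⟪x, p y⟫)
    (hidem : p ∘ₗ p = p)
    (R : W →ₗ[ℝ] W) (S : W →ₗ[ℝ] Wᗮ) (T : Wᗮ →ₗ[ℝ] Wᗮ) (St : Wᗮ →ₗ[ℝ] W)
    (hdecW : ∀ x : W, p (x : V) = (R x : V) + (S x : V))
    (hdecWp : ∀ ξ : Wᗮ, p (ξ : V) = (St ξ : V) + (T ξ : V))
    (hadj : ∀ (x : W) (ξ : Wᗮ), ⟪(S x : V), (ξ : V)⟫ = ⟪(x : V), (St ξ : V)⟫) :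
    LinearMap.ker S = LinearMap.ker R ⊔ LinearMap.ker (LinearMap.id - R) ∧
    LinearMap.ker R ⊓ LinearMap.ker (LinearMap.id - R) = ⊥ ∧
    (∀ x ∈ LinearMap.ker R, ∀ y ∈ LinearMap.ker (LinearMap.id - R), ⟪x, y⟫ = (0 : ℝ)) ∧
    Submodule.map R (LinearMap.ker S) = LinearMap.ker (LinearMap.id - R) := by
  -- key identity: St (S x) = R x - R (R x)
  have hkey : ∀ x : W, St (S x) = R x - R (R x) := by
    intro x
    have h1 : p (p (x : V)) = p (x : V) := by
      have := congrArg (fun f : V →ₗ[ℝ] V => f (x : V)) hidem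
      simpa using this
    rw [hdecW x] at h1
    have h2 : p ((R x : V) + (S x : V)) =
        ((R (R x) : V) + (St (S x) : V)) + ((S (R x) : V) + (T (S x) : V)) := by
      rw [map_add, hdecW (R x), hdecWp (S x)]; abel
    rw [h2] at h1
    -- now separate components
    have hW : ((R (R x) : V) + (St (S x) : V)) - (R x : V) =
        (S x : V) - ((S (R x) : V) + (T (S x) : V)) := by
      rw [sub_eq_sub_iff_add_eq_add, h1]
      exact add_comm _ _
    have hmemW : ((R (R x) : V) + (St (S x) : V)) - (R x : V) ∈ W := by
      exact Submodule.sub_mem _ (Submodule.add_mem _ (R (R x)).2 (St (S x)).2) (R x).2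
    have hmemWp : ((R (R x) : V) + (St (S x) : V)) - (R x : V) ∈ Wᗮ := by
      rw [hW]
      exact Submodule.sub_mem _ (S x).2 (Submodule.add_mem _ (S (R x)).2 (T (S x)).2)
    have hz : ((R (R x) : V) + (St (S x) : V)) - (R x : V) = 0 :=
      Submodule.disjoint_def.mp W.orthogonal_disjoint _ hmemW hmemWp
    have h3 : ((R (R x) : V) + (St (S x) : V)) = (R x : V) := sub_eq_zero.mp hz
    apply Subtype.ext
    push_cast
    exact eq_sub_of_add_eq' h3
  -- membership in ker S iff R x = R (R x)
  have hkerS : ∀ x : W, S x = 0 ↔ R (R x) = R x := by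
    intro x
    constructor
    · intro h
      have h2 := hkey x
      rw [h, map_zero] at h2
      exact (sub_eq_zero.mp h2.symm).symm
    · intro h
      have h0 : St (S x) = 0 := by rw [hkey x, h]; simp
      have : ⟪(S x : V), (S x : V)⟫ = 0 := by
        rw [hadj x (S x), h0]; simp
      have : (S x : V) = 0 := by
        simpa using inner_self_eq_zero.mp this
      exact Subtype.ext (by simpa using this)
  -- R is self-adjoint
  have hRsa : ∀ x y : W, ⟪(R x : V), (y : V)⟫ = ⟪(x : V), (R y : V)⟫ := by
    intro x y
    have h1 := hsa (x : V) (y : V)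
    rw [hdecW x, hdecW y] at h1
    have h2 : ⟪(S x : V), (y : V)⟫ = 0 := by
      exact Submodule.inner_left_of_mem_orthogonal y.2 (S x).2
    have h3 : ⟪(x : V), (S y : V)⟫ = 0 := by
      exact (Submodule.inner_right_of_mem_orthogonal x.2 (S y).2)
    rw [inner_add_left, inner_add_right, h2, h3] at h1
    linarith
  refine ⟨?_, ?_, ?_, ?_⟩
  · apply le_antisymm
    · intro x hx
      rw [LinearMap.mem_ker] at hx
      have hR : R (R x) = R x := (hkerS x).mp hx
      have hx1 : x - R x ∈ LinearMap.ker R := by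
        rw [LinearMap.mem_ker, map_sub, hR, sub_self]
      have hx2 : R x ∈ LinearMap.ker (LinearMap.id - R) := by
        rw [LinearMap.mem_ker]
        simp [hR]
      have : x = (x - R x) + R x := by abel
      rw [this]
      exact Submodule.add_mem _ (Submodule.mem_sup_left hx1) (Submodule.mem_sup_right hx2)
    · apply sup_le
      · intro x hx
        rw [LinearMap.mem_ker] at hx ⊢
        exact (hkerS x).mpr (by rw [hx, map_zero])
      · intro x hx
        rw [LinearMap.mem_ker] at hx ⊢
        have hxe : R x = x := by
          have h2 : x - R x = 0 := by simpa using hx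
          exact (sub_eq_zero.mp h2).symm
        exact (hkerS x).mpr (by rw [hxe, hxe])
  · rw [Submodule.eq_bot_iff]
    intro x hx
    obtain ⟨h1, h2⟩ := Submodule.mem_inf.mp hx
    rw [LinearMap.mem_ker] at h1 h2
    have : x - R x = 0 := by simpa using h2
    rw [h1] at this
    simpa using this
  · intro x hx y hy
    rw [LinearMap.mem_ker] at hx hy
    have hye : R y = y := by
      have h2 : y - R y = 0 := by simpa using hy
      exact (sub_eq_zero.mp h2).symm
    have : ⟪(x : V), (y : V)⟫ = 0 := by
      rw [← hye, ← hRsa x y, hx]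
      simp
    simpa [Submodule.coe_inner] using this
  · apply le_antisymm
    · rintro _ ⟨x, hx, rfl⟩
      have hx' : S x = 0 := hx
      have hR : R (R x) = R x := (hkerS x).mp hx'
      simp only [SetLike.mem_coe, LinearMap.mem_ker, LinearMap.sub_apply,
        LinearMap.id_apply, hR, sub_self]
    · intro y hy
      rw [LinearMap.mem_ker] at hy
      have hye : R y = y := by
        have h2 : y - R y = 0 := by simpa using hy
        exact (sub_eq_zero.mp h2).symm
      refine ⟨y, ?_, hye⟩
      show S y = 0
      exact (hkerS y).mpr (by rw [hye, hye])
end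

section
/- Let V be a real inner product space, W ⊆ V a subspace, and π a self-adjoint idempotent on V with block components R : W → W, S : W → W⊥, T : W⊥ → W⊥. Then the subspace (S(W))⊥ ∩ W⊥ (the orthogonal complement of the image of S inside W⊥) is invariant under T, and on it T restricts to an orthogonal projection; consequently (S(W))⊥ ∩ W⊥ = (ker T) ⊕ ker(id − T), where moreover ker T and ker(id − T) are both contained in (S(W))⊥. -/
open RealInnerProductSpace

/-- The orthogonal complement of `S(W)` inside `Wᗮ` is `T`-invariant, `T` restricts to an
orthogonal projection on it, and it splits as `ker T ⊕ ker(id − T)`, with both kernels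
contained in `(S(W))ᗮ`. -/
theorem stmt_4 {V : Type*} [NormedAddCommGroup V] [InnerProductSpace ℝ V]
    [FiniteDimensional ℝ V] (W : Submodule ℝ V)
    (p : V →ₗ[ℝ] V)
    (hsa : ∀ x y : V, ⟪p x, y⟫ = ⟪x, p y⟫)
    (hidem : p ∘ₗ p = p)
    (R : W →ₗ[ℝ] W) (S : W →ₗ[ℝ] Wᗮ) (T : Wᗮ →ₗ[ℝ] Wᗮ) (St : Wᗮ →ₗ[ℝ] W)
    (hdecW : ∀ x : W, p (x : V) = (R x : V) + (S x : V))
    (hdecWp : ∀ ξ : Wᗮ, p (ξ : V) = (St ξ : V) + (T ξ : V))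
    (hadj : ∀ (x : W) (ξ : Wᗮ), ⟪(S x : V), (ξ : V)⟫ = ⟪(x : V), (St ξ : V)⟫) :
    (∀ ξ ∈ (LinearMap.range S)ᗮ, T ξ ∈ (LinearMap.range S)ᗮ) ∧
    (∀ ξ ∈ (LinearMap.range S)ᗮ, T (T ξ) = T ξ) ∧
    (∀ ξ ∈ (LinearMap.range S)ᗮ, ∀ η ∈ (LinearMap.range S)ᗮ, ⟪T ξ, η⟫ = ⟪ξ, T η⟫) ∧
    (LinearMap.range S)ᗮ = LinearMap.ker T ⊔ LinearMap.ker (LinearMap.id - T) ∧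
    LinearMap.ker T ≤ (LinearMap.range S)ᗮ ∧
    LinearMap.ker (LinearMap.id - T) ≤ (LinearMap.range S)ᗮ := by
  classical
  -- inner product on submodules is the restriction
  have coe_inner : ∀ (a b : (Wᗮ : Submodule ℝ V)), ⟪a, b⟫ = ⟪(a : V), (b : V)⟫ :=
    fun a b => rfl
  -- W ⊥ Wᗮ
  have hWperp : ∀ (x : W) (η : Wᗮ), ⟪(x : V), (η : V)⟫ = 0 := fun x η =>
    (Submodule.mem_orthogonal W (η : V)).mp η.2 (x : V) x.2
  -- T is self-adjoint on all of Wᗮ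
  have Tsa : ∀ ξ η : Wᗮ, ⟪T ξ, η⟫ = ⟪ξ, T η⟫ := by
    intro ξ η
    have h1 : ⟪(T ξ : V), (η : V)⟫ = ⟪p (ξ : V), (η : V)⟫ := by
      rw [hdecWp ξ, inner_add_left, hWperp (St ξ) η]; ring
    have h2 : ⟪(ξ : V), (T η : V)⟫ = ⟪(ξ : V), p (η : V)⟫ := by
      have h0 : ⟪(ξ : V), (St η : V)⟫ = 0 := by
        rw [real_inner_comm]; exact hWperp (St η) ξ
      rw [hdecWp η, inner_add_right, h0]; ring
    rw [coe_inner, coe_inner, h1, h2, hsa]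
  -- splitting of a sum along W ⊕ Wᗮ
  have split : ∀ (a a' : W) (b b' : Wᗮ),
      (a : V) + (b : V) = (a' : V) + (b' : V) → a = a' ∧ b = b' := by
    intro a a' b b' h
    have hd : ((a - a' : W) : V) = ((b' - b : Wᗮ) : V) := by
      push_cast
      rw [sub_eq_sub_iff_add_eq_add]
      rw [h]; abel
    have hmem : ((a - a' : W) : V) ∈ W ⊓ Wᗮ :=
      ⟨(a - a').2, hd ▸ (b' - b).2⟩
    rw [Submodule.inf_orthogonal_eq_bot, Submodule.mem_bot] at hmem
    constructor
    · apply Subtype.ext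
      have h0 : ((a : V)) - ((a' : V)) = 0 := by push_cast at hmem; exact hmem
      exact sub_eq_zero.mp h0
    · apply Subtype.ext
      have h0 : ((b' : V)) - ((b : V)) = 0 := by
        have := hd ▸ hmem; push_cast at this; exact this
      exact (sub_eq_zero.mp h0).symm
  -- block identity from idempotency on W
  have hblockW : ∀ x : W, S (R x) + T (S x) = S x := by
    intro x
    have h : p (p (x : V)) = p (x : V) := by
      have := congrArg (fun f => f (x : V)) hidem
      simpa using this
    rw [hdecW x, map_add, hdecW (R x), hdecWp (S x)] at h
    have h' : ((R (R x) + St (S x) : W) : V) + ((S (R x) + T (S x) : Wᗮ) : V)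
        = ((R x : W) : V) + ((S x : Wᗮ) : V) := by
      push_cast; rw [← h]; abel
    exact (split _ _ _ _ h').2
  -- block identity from idempotency on Wᗮ
  have hblockWp : ∀ ξ : Wᗮ, S (St ξ) + T (T ξ) = T ξ := by
    intro ξ
    have h : p (p (ξ : V)) = p (ξ : V) := by
      have := congrArg (fun f => f (ξ : V)) hidem
      simpa using this
    rw [hdecWp ξ, map_add, hdecW (St ξ), hdecWp (T ξ)] at h
    have h' : ((R (St ξ) + St (T ξ) : W) : V) + ((S (St ξ) + T (T ξ) : Wᗮ) : V)
        = ((St ξ : W) : V) + ((T ξ : Wᗮ) : V) := by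
      push_cast; rw [← h]; abel
    exact (split _ _ _ _ h').2
  -- ⟪S (St ξ), ξ⟫ = ‖St ξ‖²
  have hSSt : ∀ ξ : Wᗮ, ⟪S (St ξ), ξ⟫ = ⟪(St ξ : V), (St ξ : V)⟫ := by
    intro ξ; rw [coe_inner, hadj]
  have hSt_zero_mem : ∀ ξ : Wᗮ, St ξ = 0 → ξ ∈ (LinearMap.range S)ᗮ := by
    intro ξ h0
    rw [Submodule.mem_orthogonal]
    rintro u ⟨x, rfl⟩
    rw [coe_inner, hadj, h0]
    simp
  have hSSt_zero : ∀ ξ : Wᗮ, S (St ξ) = 0 → St ξ = 0 := by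
    intro ξ h0
    have h2 : ⟪(St ξ : V), (St ξ : V)⟫ = 0 := by
      rw [← hSSt ξ, h0, inner_zero_left]
    exact Subtype.ext ((inner_self_eq_zero (𝕜 := ℝ)).mp h2)
  have hmem_St : ∀ ξ : Wᗮ, ξ ∈ (LinearMap.range S)ᗮ → St ξ = 0 := by
    intro ξ hξ
    have h0 : ⟪S (St ξ), ξ⟫ = 0 :=
      (Submodule.mem_orthogonal _ _).mp hξ _ ⟨St ξ, rfl⟩
    have h2 : ⟪(St ξ : V), (St ξ : V)⟫ = 0 := by rw [← hSSt ξ]; exact h0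
    exact Subtype.ext ((inner_self_eq_zero (𝕜 := ℝ)).mp h2)
  -- claim 2: T idempotent on (range S)ᗮ
  have claim2 : ∀ ξ ∈ (LinearMap.range S)ᗮ, T (T ξ) = T ξ := by
    intro ξ hξ
    have h := hblockWp ξ
    rw [hmem_St ξ hξ, map_zero, zero_add] at h
    exact h
  -- claim 1: T-invariance
  have claim1 : ∀ ξ ∈ (LinearMap.range S)ᗮ, T ξ ∈ (LinearMap.range S)ᗮ := by
    intro ξ hξ
    rw [Submodule.mem_orthogonal]
    rintro u ⟨x, rfl⟩
    have hTS : T (S x) = S (x - R x) := by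
      rw [map_sub, eq_sub_iff_add_eq, add_comm]
      exact hblockW x
    calc ⟪S x, T ξ⟫ = ⟪T (S x), ξ⟫ := (Tsa (S x) ξ).symm
      _ = ⟪S (x - R x), ξ⟫ := by rw [hTS]
      _ = 0 := (Submodule.mem_orthogonal _ _).mp hξ _ ⟨x - R x, rfl⟩
  -- claims 5 & 6
  have claim5 : LinearMap.ker T ≤ (LinearMap.range S)ᗮ := by
    intro ξ hξ
    rw [LinearMap.mem_ker] at hξ
    have h := hblockWp ξ
    rw [hξ, map_zero, add_zero] at h
    exact hSt_zero_mem ξ (hSSt_zero ξ h)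
  have claim6 : LinearMap.ker (LinearMap.id - T) ≤ (LinearMap.range S)ᗮ := by
    intro ξ hξ
    rw [LinearMap.mem_ker, LinearMap.sub_apply, LinearMap.id_apply, sub_eq_zero,
      eq_comm] at hξ
    have h := hblockWp ξ
    rw [hξ, hξ] at h
    have hS0 : S (St ξ) = 0 := add_eq_right.mp h
    exact hSt_zero_mem ξ (hSSt_zero ξ hS0)
  refine ⟨claim1, claim2, fun ξ _ η _ => Tsa ξ η, ?_, claim5, claim6⟩
  apply le_antisymm
  · intro ξ hξ
    have hTT := claim2 ξ hξ
    have h1 : ξ - T ξ ∈ LinearMap.ker T := by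
      rw [LinearMap.mem_ker, map_sub, hTT, sub_self]
    have h2 : T ξ ∈ LinearMap.ker (LinearMap.id - T) := by
      rw [LinearMap.mem_ker, LinearMap.sub_apply, LinearMap.id_apply, hTT, sub_self]
    have hsum : ξ = (ξ - T ξ) + T ξ := by abel
    rw [hsum]
    exact Submodule.add_mem_sup h1 h2
  · exact sup_le claim5 claim6
end

section
/- Let k₁, …, k_ℓ be positive reals, k := (∑ᵢ 1/kᵢ)⁻¹, aᵢ := √(k/kᵢ), and let V ⊆ (ℝ^{n+1})^ℓ be an (n+1)-dimensional subspace such that each coordinate projection πᵢ restricted to V is a similarity of ratio aᵢ (i.e. ‖πᵢ v‖ = aᵢ‖v‖ for all v ∈ V). Then there exist orthogonal linear maps T₁, …, T_ℓ ∈ O(n+1) such that V = { (a₁T₁(x), …, a_ℓT_ℓ(x)) : x ∈ ℝ^{n+1} }. -/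
/-- If each coordinate projection restricted to the `(n+1)`-dimensional subspace `V` is a
similarity of ratio `aᵢ`, then there are orthogonal maps `Tᵢ ∈ O(n+1)` with
`V = {(a₁T₁x, …, a_ℓT_ℓx) : x ∈ ℝⁿ⁺¹}`. -/
theorem stmt_9 {ℓ n : ℕ} (k : Fin ℓ → ℝ) (hk : ∀ i, 0 < k i)
    (kk : ℝ) (hkk : kk = (∑ i, 1 / k i)⁻¹)
    (a : Fin ℓ → ℝ) (ha : ∀ i, a i = Real.sqrt (kk / k i))
    (V : Submodule ℝ (PiLp 2 (fun _ : Fin ℓ => EuclideanSpace ℝ (Fin (n + 1)))))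
    (hdim : Module.finrank ℝ V = n + 1)
    (hsim : ∀ x ∈ V, ∀ i, ‖x i‖ = a i * ‖x‖) :
    ∃ T : Fin ℓ → (EuclideanSpace ℝ (Fin (n + 1)) ≃ₗᵢ[ℝ] EuclideanSpace ℝ (Fin (n + 1))),
      ∀ y : PiLp 2 (fun _ : Fin ℓ => EuclideanSpace ℝ (Fin (n + 1))),
        y ∈ V ↔ ∃ x : EuclideanSpace ℝ (Fin (n + 1)), ∀ i, y i = a i • T i x := by
  classical
  set P := PiLp 2 (fun _ : Fin ℓ => EuclideanSpace ℝ (Fin (n + 1))) with hP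
  -- ℓ is positive
  have hℓ : 0 < ℓ := by
    rcases Nat.eq_zero_or_pos ℓ with h | h
    · exfalso
      subst h
      haveI : Subsingleton P := ⟨fun x y => PiLp.ext fun i => Fin.elim0 i⟩
      haveI : Subsingleton V := ⟨fun x y => Subtype.ext (Subsingleton.elim _ _)⟩
      have := Module.finrank_zero_of_subsingleton (R := ℝ) (M := V)
      omega
    · exact h
  haveI : Nonempty (Fin ℓ) := ⟨⟨0, hℓ⟩⟩
  -- positivity of a
  have hkkpos : 0 < kk := by
    rw [hkk]
    apply inv_pos.mpr
    apply Finset.sum_pos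
    · intro i _
      exact div_pos one_pos (hk i)
    · exact Finset.univ_nonempty
  have hapos : ∀ i, 0 < a i := fun i => by
    rw [ha i]; exact Real.sqrt_pos.mpr (div_pos hkkpos (hk i))
  haveI : FiniteDimensional ℝ V := Module.finite_of_finrank_eq_succ hdim
  -- the scaled coordinate projections, as linear isometries
  have hS : ∀ i : Fin ℓ, ∃ S : V →ₗᵢ[ℝ] EuclideanSpace ℝ (Fin (n + 1)),
      ∀ v : V, S v = (a i)⁻¹ • (v : P) i := by
    intro i
    refine ⟨⟨⟨⟨fun v => (a i)⁻¹ • (v : P) i, ?_⟩, ?_⟩, ?_⟩, fun v => rfl⟩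
    · intro v w
      simp [smul_add]
    · intro c v
      show (a i)⁻¹ • ((c • v : V) : P) i = c • ((a i)⁻¹ • (v : P) i)
      rw [Submodule.coe_smul, PiLp.smul_apply, smul_comm]
    · intro v
      have h1 : ‖(v : P) i‖ = a i * ‖(v : P)‖ := hsim v v.2 i
      show ‖(a i)⁻¹ • (v : P) i‖ = ‖v‖
      rw [norm_smul, Real.norm_eq_abs, abs_inv, abs_of_pos (hapos i), h1,
        ← mul_assoc, inv_mul_cancel₀ (ne_of_gt (hapos i)), one_mul]
      rfl
  choose S hSa using hS
  have hrank : Module.finrank ℝ V = Module.finrank ℝ (EuclideanSpace ℝ (Fin (n + 1))) :=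
    hdim.trans finrank_euclideanSpace_fin.symm
  let Φ : ∀ _ : Fin ℓ, V ≃ₗᵢ[ℝ] EuclideanSpace ℝ (Fin (n + 1)) :=
    fun i => (S i).toLinearIsometryEquiv hrank
  have hΦ : ∀ i (v : V), Φ i v = (a i)⁻¹ • (v : P) i := fun i v => hSa i v
  let i₀ : Fin ℓ := ⟨0, hℓ⟩
  let φ := Φ i₀
  refine ⟨fun i => φ.symm.trans (Φ i), fun y => ?_⟩
  constructor
  · intro hy
    refine ⟨φ ⟨y, hy⟩, fun i => ?_⟩
    have : (φ.symm.trans (Φ i)) (φ ⟨y, hy⟩) = Φ i ⟨y, hy⟩ := by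
      simp [φ]
    rw [this, hΦ i ⟨y, hy⟩, smul_smul, mul_inv_cancel₀ (ne_of_gt (hapos i)), one_smul]
  · rintro ⟨x, hx⟩
    set z : V := φ.symm x with hzdef
    have hz : ∀ i, (z : P) i = a i • (φ.symm.trans (Φ i)) x := by
      intro i
      have h1 : (φ.symm.trans (Φ i)) x = Φ i z := by simp [z]
      rw [h1, hΦ i z, smul_smul, mul_inv_cancel₀ (ne_of_gt (hapos i)), one_smul]
    have hyz : y = (z : P) := by
      refine PiLp.ext fun i => ?_
      rw [hx i, hz i]
    rw [hyz]
    exact z.2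
end

section
/- Let V₁, …, V_ℓ be real inner product spaces, W a subspace of the product, and Rᵢ, Sᵢ the blocks of the factor projections πᵢ relative to W ⊕ W⊥. Suppose k₁, …, k_ℓ are nonzero reals such that kᵢ Rᵢ = kⱼ Rⱼ for all i, j, and R₁ ≠ 0. Then with Mᵢ := ∏_{j≠i} kⱼ and λ := ∑ᵢ Mᵢ, one has λ ≠ 0 and Rᵢ = (Mᵢ/λ) · id_W for each i. -/
open RealInnerProductSpace

/-- If `kᵢ Rᵢ = kⱼ Rⱼ` for all `i, j` with nonzero `kᵢ` and some `Rᵢ₀ ≠ 0`, then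
`λ = ∑ Mᵢ ≠ 0` (where `Mᵢ = ∏_{j≠i} kⱼ`) and `Rᵢ = (Mᵢ/λ)·id` for each `i`. -/
theorem stmt_12 {ℓ : ℕ} (V : Fin ℓ → Type*)
    [∀ i, NormedAddCommGroup (V i)] [∀ i, InnerProductSpace ℝ (V i)]
    (p : Fin ℓ → (PiLp 2 V →ₗ[ℝ] PiLp 2 V))
    (hp : ∀ (i : Fin ℓ) (x : PiLp 2 V) (j : Fin ℓ), p i x j = if j = i then x j else 0)
    (W : Submodule ℝ (PiLp 2 V))
    (R : Fin ℓ → (W →ₗ[ℝ] W)) (S : Fin ℓ → (W →ₗ[ℝ] Wᗮ))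
    (T : Fin ℓ → (Wᗮ →ₗ[ℝ] Wᗮ)) (St : Fin ℓ → (Wᗮ →ₗ[ℝ] W))
    (hdecW : ∀ (i : Fin ℓ) (x : W),
      p i (x : PiLp 2 V) = (R i x : PiLp 2 V) + (S i x : PiLp 2 V))
    (hdecWp : ∀ (i : Fin ℓ) (ξ : Wᗮ),
      p i (ξ : PiLp 2 V) = (St i ξ : PiLp 2 V) + (T i ξ : PiLp 2 V))
    (k : Fin ℓ → ℝ) (hk : ∀ i, k i ≠ 0)
    (hkR : ∀ i j, k i • R i = k j • R j)
    (i₀ : Fin ℓ) (hR₀ : R i₀ ≠ 0)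
    (M : Fin ℓ → ℝ) (hM : ∀ i, M i = ∏ j ∈ Finset.univ.erase i, k j)
    (lam : ℝ) (hlam : lam = ∑ i, M i) :
    lam ≠ 0 ∧ ∀ i, R i = (M i / lam) • LinearMap.id := by
  classical
  -- Step 1: ∑ R i = id on W
  have hsum : ∑ i, R i = (LinearMap.id : W →ₗ[ℝ] W) := by
    refine LinearMap.ext fun x => ?_
    have hx : ∑ i, p i (x : PiLp 2 V) = (x : PiLp 2 V) := by
      refine PiLp.ext fun j => ?_
      have h1 : (∑ i, p i (x : PiLp 2 V)) j = ∑ i, p i (x : PiLp 2 V) j :=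
        by rw [WithLp.ofLp_sum]; exact Finset.sum_apply j Finset.univ _
      rw [h1]
      simp [hp]
    have hx2 : (x : PiLp 2 V) = (∑ i, (R i x : PiLp 2 V)) + (∑ i, (S i x : PiLp 2 V)) := by
      rw [← hx]
      rw [← Finset.sum_add_distrib]
      exact Finset.sum_congr rfl fun i _ => hdecW i x
    have ha : (x : PiLp 2 V) - (∑ i, (R i x : PiLp 2 V)) = ∑ i, (S i x : PiLp 2 V) := by
      rw [hx2]; abel
    have hW : (x : PiLp 2 V) - (∑ i, (R i x : PiLp 2 V)) ∈ W := by
      exact sub_mem x.2 (Submodule.sum_mem W fun i _ => (R i x).2)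
    have hWp : (x : PiLp 2 V) - (∑ i, (R i x : PiLp 2 V)) ∈ Wᗮ := by
      rw [ha]
      exact Submodule.sum_mem Wᗮ fun i _ => (S i x).2
    have hzero : (x : PiLp 2 V) - (∑ i, (R i x : PiLp 2 V)) = 0 :=
      Submodule.disjoint_def.mp W.orthogonal_disjoint _ hW hWp
    have hcoe : ((∑ i, R i x : W) : PiLp 2 V) = ∑ i, (R i x : PiLp 2 V) := by
      exact map_sum (W.subtype) _ _
    have : ((∑ i, R i) x : PiLp 2 V) = (x : PiLp 2 V) := by
      rw [LinearMap.sum_apply, hcoe]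
      exact (sub_eq_zero.mp hzero).symm
    exact Subtype.ext this
  -- Step 2: algebra
  set C : W →ₗ[ℝ] W := k i₀ • R i₀ with hC
  have hRi : ∀ i, R i = (k i)⁻¹ • C := by
    intro i
    rw [hC, ← hkR i i₀, smul_smul, inv_mul_cancel₀ (hk i), one_smul]
  set s : ℝ := ∑ i, (k i)⁻¹ with hs
  have hid : s • C = (LinearMap.id : W →ₗ[ℝ] W) := by
    rw [← hsum, hs, Finset.sum_smul]
    exact Finset.sum_congr rfl fun i _ => (hRi i).symm
  have hKne : (∏ j, k j) ≠ 0 := Finset.prod_ne_zero_iff.mpr fun i _ => hk i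
  have hMi : ∀ i, M i = (k i)⁻¹ * ∏ j, k j := by
    intro i
    have h := Finset.mul_prod_erase Finset.univ k (Finset.mem_univ i)
    rw [hM i, ← h, inv_mul_cancel_left₀ (hk i)]
  have hlam' : lam = s * ∏ j, k j := by
    rw [hlam, hs, Finset.sum_mul]
    exact Finset.sum_congr rfl fun i _ => hMi i
  have hsne : s ≠ 0 := by
    intro h
    apply hR₀
    have hid0 : (LinearMap.id : W →ₗ[ℝ] W) = 0 := by rw [← hid, h, zero_smul]
    ext x
    have : x = (0 : W) := by
      have := congrArg (fun f : W →ₗ[ℝ] W => f x) hid0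
      simpa using this
    simp [this]
  have hlamne : lam ≠ 0 := by
    rw [hlam']; exact mul_ne_zero hsne hKne
  refine ⟨hlamne, fun i => ?_⟩
  have hCid : C = s⁻¹ • (LinearMap.id : W →ₗ[ℝ] W) := by
    rw [← hid, smul_smul, inv_mul_cancel₀ hsne, one_smul]
  rw [hRi i, hCid, smul_smul]
  congr 1
  rw [hMi i, hlam']
  have h1 := hk i
  field_simp
end

section
/- Let M, N be semi-Riemannian manifolds, P : TN → TN a parallel (1,1)-tensor field on N (∇̄P = 0), and f : M → N an isometric immersion with second fundamental form α and shape operator A. Define R : TM → TM, S : TM → T⊥M by the tangent/normal decomposition P f_* X = f_* R X + S X. Then for all X, Y ∈ Γ(TM): (∇_X R)Y = A_{S Y} X + Sᵗ α(X, Y), where Sᵗ is the pointwise adjoint of S. -/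
/-- For a parallel self-adjoint `(1,1)`-tensor `P` along an isometric immersion, with
tangent/normal blocks `P f_* = f_* R + S` and `P|_⊥ = f_* Sᵗ + T`, one has
`(∇_X R)Y = A_{S Y} X + Sᵗ α(X, Y)`.
Here `TM`, `NM`, `E` model the tangent, normal and ambient (pulled-back) bundles of
sections, `F = f_*`, `J` the inclusion of the normal bundle, `nablaM`/`nablaPerp`/`nablaBar`
the Levi-Civita, normal and ambient connections, `alpha` the second fundamental form and
`A` the shape operator; `gTM`/`gNM` are the (possibly indefinite) metrics. -/
theorem stmt_15 {TM NM E : Type*}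
    [AddCommGroup TM] [Module ℝ TM] [AddCommGroup NM] [Module ℝ NM]
    [AddCommGroup E] [Module ℝ E]
    (gTM : TM →ₗ[ℝ] TM →ₗ[ℝ] ℝ) (gNM : NM →ₗ[ℝ] NM →ₗ[ℝ] ℝ)
    (F : TM →ₗ[ℝ] E) (J : NM →ₗ[ℝ] E)
    (hindep : ∀ (v : TM) (ξ : NM), F v + J ξ = 0 → v = 0 ∧ ξ = 0)
    (nablaM : TM → TM → TM) (nablaPerp : TM → NM → NM) (nablaBar : TM → E → E)
    (hbar_add : ∀ X (Z Z' : E), nablaBar X (Z + Z') = nablaBar X Z + nablaBar X Z')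
    (alpha : TM → TM → NM) (A : NM → TM → TM)
    (hshape : ∀ X Y ξ, gNM (alpha X Y) ξ = gTM (A ξ X) Y)
    (P : E →ₗ[ℝ] E)
    (hPpar : ∀ X (Z : E), nablaBar X (P Z) = P (nablaBar X Z))
    (R : TM →ₗ[ℝ] TM) (S : TM →ₗ[ℝ] NM) (St : NM →ₗ[ℝ] TM) (T : NM →ₗ[ℝ] NM)
    (hPF : ∀ X, P (F X) = F (R X) + J (S X))
    (hPJ : ∀ ξ, P (J ξ) = F (St ξ) + J (T ξ))
    (hSt : ∀ X ξ, gNM (S X) ξ = gTM X (St ξ))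
    (hGauss : ∀ X Y, nablaBar X (F Y) = F (nablaM X Y) + J (alpha X Y))
    (hWein : ∀ X ξ, nablaBar X (J ξ) = -F (A ξ X) + J (nablaPerp X ξ)) :
    ∀ X Y, nablaM X (R Y) - R (nablaM X Y) = A (S Y) X + St (alpha X Y) := by
  intro X Y
  have h1 : nablaBar X (P (F Y))
      = F (R (nablaM X Y) + St (alpha X Y)) + J (S (nablaM X Y) + T (alpha X Y)) := by
    rw [hPpar, hGauss, map_add, hPF, hPJ, map_add, map_add]
    abel
  have h2 : nablaBar X (P (F Y))
      = F (nablaM X (R Y) - A (S Y) X) + J (alpha X (R Y) + nablaPerp X (S Y)) := by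
    rw [hPF, hbar_add, hGauss, hWein, map_sub, map_add]
    abel
  have key : F ((nablaM X (R Y) - A (S Y) X) - (R (nablaM X Y) + St (alpha X Y)))
      + J ((alpha X (R Y) + nablaPerp X (S Y)) - (S (nablaM X Y) + T (alpha X Y))) = 0 := by
    rw [h1] at h2
    simp only [map_sub, map_add] at h2 ⊢
    linear_combination (norm := module) -h2
  have := (hindep _ _ key).1
  have h := sub_eq_zero.mp this
  linear_combination (norm := module) h
end

section
/- Let M, N be semi-Riemannian manifolds, P a parallel self-adjoint (1,1)-tensor on N, f : M → N an isometric immersion, and decompose P f_* X = f_* R X + S X (X tangent) and P ξ = f_* Sᵗ ξ + T ξ (ξ normal). Then for all X ∈ Γ(TM) and ξ ∈ Γ(T⊥M): (∇_X S)Y = T α(X,Y) − α(X, R Y) and (∇_X T)ξ = −S A_ξ X − α(X, Sᵗ ξ), where (∇_X S)Y := ∇⊥_X(SY) − S ∇_X Y and (∇_X T)ξ := ∇⊥_X(Tξ) − T ∇⊥_X ξ. -/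
/-- For a parallel self-adjoint `(1,1)`-tensor `P` along an isometric immersion, with
blocks `P f_* = f_* R + S` and `P|_⊥ = f_* Sᵗ + T`, one has
`(∇_X S)Y = T α(X,Y) − α(X, R Y)` and `(∇_X T)ξ = −S A_ξ X − α(X, Sᵗ ξ)`. -/
theorem stmt_16 {TM NM E : Type*}
    [AddCommGroup TM] [Module ℝ TM] [AddCommGroup NM] [Module ℝ NM]
    [AddCommGroup E] [Module ℝ E]
    (gTM : TM →ₗ[ℝ] TM →ₗ[ℝ] ℝ) (gNM : NM →ₗ[ℝ] NM →ₗ[ℝ] ℝ)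
    (gE : E →ₗ[ℝ] E →ₗ[ℝ] ℝ)
    (F : TM →ₗ[ℝ] E) (J : NM →ₗ[ℝ] E)
    (hindep : ∀ (v : TM) (ξ : NM), F v + J ξ = 0 → v = 0 ∧ ξ = 0)
    (nablaM : TM → TM → TM) (nablaPerp : TM → NM → NM) (nablaBar : TM → E → E)
    (hbar_add : ∀ X (Z Z' : E), nablaBar X (Z + Z') = nablaBar X Z + nablaBar X Z')
    (alpha : TM → TM → NM) (A : NM → TM → TM)
    (hshape : ∀ X Y ξ, gNM (alpha X Y) ξ = gTM (A ξ X) Y)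
    (P : E →ₗ[ℝ] E)
    (hPsa : ∀ z w : E, gE (P z) w = gE z (P w))
    (hPpar : ∀ X (Z : E), nablaBar X (P Z) = P (nablaBar X Z))
    (R : TM →ₗ[ℝ] TM) (S : TM →ₗ[ℝ] NM) (St : NM →ₗ[ℝ] TM) (T : NM →ₗ[ℝ] NM)
    (hPF : ∀ X, P (F X) = F (R X) + J (S X))
    (hPJ : ∀ ξ, P (J ξ) = F (St ξ) + J (T ξ))
    (hSt : ∀ X ξ, gNM (S X) ξ = gTM X (St ξ))
    (hGauss : ∀ X Y, nablaBar X (F Y) = F (nablaM X Y) + J (alpha X Y))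
    (hWein : ∀ X ξ, nablaBar X (J ξ) = -F (A ξ X) + J (nablaPerp X ξ)) :
    (∀ X Y, nablaPerp X (S Y) - S (nablaM X Y) = T (alpha X Y) - alpha X (R Y)) ∧
    (∀ X ξ, nablaPerp X (T ξ) - T (nablaPerp X ξ) = -S (A ξ X) - alpha X (St ξ)) := by

  have split : ∀ (a c : TM) (b d : NM), F a + J b = F c + J d → b = d := by
    intro a c b d h
    have h0 : F (a - c) + J (b - d) = 0 := by
      rw [map_sub, map_sub,
        show F a - F c + (J b - J d) = (F a + J b) - (F c + J d) by abel, h, sub_self]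
    exact sub_eq_zero.mp (hindep _ _ h0).2
  constructor
  · intro X Y
    have key : F (nablaM X (R Y) + -A (S Y) X) + J (alpha X (R Y) + nablaPerp X (S Y))
        = F (R (nablaM X Y) + St (alpha X Y)) + J (S (nablaM X Y) + T (alpha X Y)) := by
      have := hPpar X (F Y)
      rw [hGauss, hPF] at this
      rw [hbar_add, hGauss, hWein] at this
      rw [map_add, hPF, hPJ] at this
      simp only [map_add, map_neg]
      abel_nf at this ⊢
      exact this
    have hn := split _ _ _ _ key
    have : alpha X (R Y) + nablaPerp X (S Y) = S (nablaM X Y) + T (alpha X Y) := hn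
    linear_combination (norm := module) this
  · intro X ξ
    have key : F (nablaM X (St ξ) + -A (T ξ) X) + J (alpha X (St ξ) + nablaPerp X (T ξ))
        = F (-R (A ξ X) + St (nablaPerp X ξ)) + J (-S (A ξ X) + T (nablaPerp X ξ)) := by
      have := hPpar X (J ξ)
      rw [hWein, hPJ] at this
      rw [hbar_add, hGauss, hWein] at this
      rw [map_add, map_neg, hPF, hPJ] at this
      simp only [map_add, map_neg]
      abel_nf at this ⊢
      exact this
    have hn := split _ _ _ _ key
    have : alpha X (St ξ) + nablaPerp X (T ξ) = -S (A ξ X) + T (nablaPerp X ξ) := hn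
    linear_combination (norm := module) this
end
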